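/- Let f_s(t) = ∏_{k=1}^{∞} cos(t/k!) for t ∈ ℝ, and set t_n = π·(2n)!. Then f_s(t_n) > -1 for every n ∈ ℕ and f_s(t_n) → -1 as n → ∞. -/

import Mathlib

open Nat Filter

noncomputable def fs (t : ℝ) : ℝ := ∏' k : ℕ, Real.cos (t / ((k + 1)! : ℝ))

noncomputable def tn (n : ℕ) : ℝ := Real.pi * ((2 * n)! : ℝ)

-- log cos lower bound
lemma cos_pos_aux {x : ℝ} (h0 : 0 ≤ x) (h : x ≤ Real.pi / 3) : 0 < Real.cos x := by
  apply Real.cos_pos_of_mem_Ioo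
  constructor
  · nlinarith [Real.pi_pos]
  · nlinarith [Real.pi_pos]

lemma log_cos_lower {x : ℝ} (h0 : 0 ≤ x) (h : x ≤ Real.pi / 3) :
    -(2 * x ^ 2) ≤ Real.log (Real.cos x) := by
  have hpi : Real.pi < 3.15 := Real.pi_lt_d2
  have hx1 : x ≤ 1.05 := by linarith
  have hu : x ^ 2 / 2 ≤ 2 / 3 := by nlinarith
  have hcos : 1 - x ^ 2 / 2 ≤ Real.cos x := Real.one_sub_sq_div_two_le_cos
  rw [Real.le_log_iff_exp_le (cos_pos_aux h0 h)]
  have h1 : Real.exp (-(2 * x ^ 2)) ≤ Real.exp (-(3 * (x ^ 2 / 2))) := by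
    apply Real.exp_le_exp.2; nlinarith
  have h2 : Real.exp (-(3 * (x ^ 2 / 2))) ≤ 1 - x ^ 2 / 2 := by
    set u := x ^ 2 / 2 with hud
    have hu0 : 0 ≤ u := by positivity
    have hexp : 1 + 3 * u ≤ Real.exp (3 * u) := by
      have := Real.add_one_le_exp (3 * u); linarith
    rw [Real.exp_neg]
    calc (Real.exp (3*u))⁻¹ ≤ (1 + 3 * u)⁻¹ := by
          apply inv_anti₀ (by linarith) hexp
      _ ≤ 1 - u := by
          rw [inv_eq_one_div, div_le_iff₀ (by linarith : (0:ℝ) < 1 + 3*u)]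
          nlinarith
  linarith

lemma fact_lb (N j : ℕ) : N ! * (N + 1) ^ (j + 1) ≤ (j + N + 1)! := by
  induction j with
  | zero => simp [Nat.factorial_succ, Nat.mul_comm]
  | succ j ih =>
      have h : (j + 1 + N + 1)! = (j + N + 2) * (j + N + 1)! := by
        rw [show j + 1 + N + 1 = (j + N + 1) + 1 by omega, Nat.factorial_succ]
      rw [h, pow_succ]
      calc N ! * ((N + 1) ^ (j + 1) * (N + 1)) = (N + 1) * (N ! * (N + 1) ^ (j + 1)) := by ring
        _ ≤ (j + N + 2) * (j + N + 1)! := Nat.mul_le_mul (by omega) ih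

lemma finprod_eq (n : ℕ) (hn : 0 < n) :
    ∏ i ∈ Finset.range (2 * n), Real.cos (tn n / ((i + 1)! : ℝ)) = -1 := by
  have hfac : ∀ i ∈ Finset.range (2 * n),
      Real.cos (tn n / ((i + 1)! : ℝ)) = (-1 : ℝ) ^ ((2 * n)! / (i + 1)!) := by
    intro i hi
    rw [Finset.mem_range] at hi
    have hdvd : (i + 1)! ∣ (2 * n)! := Nat.factorial_dvd_factorial (by omega)
    have hne : ((i + 1)! : ℝ) ≠ 0 := by
      exact_mod_cast (Nat.factorial_pos (i + 1)).ne'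
    have hcast : (((2 * n)! / (i + 1)! : ℕ) : ℝ) = ((2 * n)! : ℝ) / ((i + 1)! : ℝ) :=
      Nat.cast_div hdvd hne
    have harg : tn n / ((i + 1)! : ℝ) = (((2 * n)! / (i + 1)! : ℕ) : ℝ) * Real.pi := by
      rw [hcast, tn]; field_simp
    rw [harg]
    simpa using Real.cos_nat_mul_pi_sub 0 ((2 * n)! / (i + 1)!)
  rw [Finset.prod_congr rfl hfac, Finset.prod_pow_eq_pow_sum]
  have hodd : Odd (∑ i ∈ Finset.range (2 * n), (2 * n)! / (i + 1)!) := by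
    have hsplit : ∑ i ∈ Finset.range (2 * n), (2 * n)! / (i + 1)!
        = (∑ i ∈ Finset.range (2 * n - 1), (2 * n)! / (i + 1)!) + 1 := by
      rw [show 2 * n = (2 * n - 1) + 1 by omega, Finset.sum_range_succ]
      congr 1
      rw [show 2 * n - 1 + 1 = 2 * n by omega]
      exact Nat.div_self (Nat.factorial_pos _)
    have heven : 2 ∣ ∑ i ∈ Finset.range (2 * n - 1), (2 * n)! / (i + 1)! := by
      apply Finset.dvd_sum
      intro i hi
      rw [Finset.mem_range] at hi
      have hdvd : (i + 1)! ∣ (2 * n - 1)! := Nat.factorial_dvd_factorial (by omega)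
      have hNfac : (2 * n)! = 2 * n * (2 * n - 1)! := by
        conv_lhs => rw [show 2 * n = (2 * n - 1) + 1 by omega]
        rw [Nat.factorial_succ]
        congr 1
        omega
      rw [hNfac, Nat.mul_div_assoc _ hdvd]
      exact Dvd.dvd.mul_right ⟨n, rfl⟩ _
    obtain ⟨c, hc⟩ := heven
    exact ⟨c, by omega⟩
  exact hodd.neg_one_pow

noncomputable def Sn (n : ℕ) : ℝ :=
  ∑' j : ℕ, Real.log (Real.cos (tn n / ((j + 2 * n + 1)! : ℝ)))

lemma Sn_facts (n : ℕ) (hn : 0 < n) :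
    Summable (fun j => Real.log (Real.cos (tn n / ((j + 2 * n + 1)! : ℝ)))) ∧
      Sn n < 0 ∧ -(9 / 4 * Real.pi ^ 2 * (1 / ((n : ℝ) + 1))) ≤ Sn n ∧
      HasProd (fun j => Real.cos (tn n / ((j + 2 * n + 1)! : ℝ))) (Real.exp (Sn n)) := by
  have hpi := Real.pi_pos
  set x : ℕ → ℝ := fun j => tn n / ((j + 2 * n + 1)! : ℝ) with hx
  set l : ℕ → ℝ := fun j => Real.log (Real.cos (x j)) with hl
  have hFpos : ∀ j, (0 : ℝ) < ((j + 2 * n + 1)! : ℝ) := fun j => by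
    exact_mod_cast Nat.factorial_pos _
  have hxpos : ∀ j, 0 < x j := fun j => by
    apply div_pos _ (hFpos j)
    rw [tn]
    positivity
  have hxle : ∀ j, x j ≤ Real.pi / ((2 * (n : ℝ) + 1) * 3 ^ j) := by
    intro j
    have hnat : (2 * n)! * ((2 * n + 1) * 3 ^ j) ≤ (j + 2 * n + 1)! := by
      calc (2 * n)! * ((2 * n + 1) * 3 ^ j) ≤ (2 * n)! * ((2 * n + 1) * (2 * n + 1) ^ j) :=
            Nat.mul_le_mul_left _ (Nat.mul_le_mul_left _ (Nat.pow_le_pow_left (by omega) j))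
        _ = (2 * n)! * (2 * n + 1) ^ (j + 1) := by ring
        _ ≤ (j + 2 * n + 1)! := fact_lb (2 * n) j
    have hc : ((2 * n)! : ℝ) * ((2 * (n : ℝ) + 1) * 3 ^ j) ≤ ((j + 2 * n + 1)! : ℝ) := by
      exact_mod_cast hnat
    have hden : (0 : ℝ) < (2 * (n : ℝ) + 1) * 3 ^ j := by positivity
    rw [hx, tn, div_le_div_iff₀ (hFpos j) hden]
    nlinarith [hc, hpi, (hFpos j)]
  have hd3 : ∀ j, (3 : ℝ) ≤ (2 * (n : ℝ) + 1) * 3 ^ j := by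
    intro j
    have h1 : (3 : ℝ) ≤ 2 * (n : ℝ) + 1 := by
      have : (1 : ℝ) ≤ n := by exact_mod_cast hn
      linarith
    have h2 : (1 : ℝ) ≤ 3 ^ j := one_le_pow₀ (by norm_num)
    nlinarith
  have hxle3 : ∀ j, x j ≤ Real.pi / 3 := fun j =>
    (hxle j).trans (div_le_div_of_nonneg_left hpi.le (by norm_num) (hd3 j))
  have hcospos : ∀ j, 0 < Real.cos (x j) := fun j => cos_pos_aux (hxpos j).le (hxle3 j)
  have hlnonpos : ∀ j, l j ≤ 0 := fun j => Real.log_nonpos (hcospos j).le (Real.cos_le_one _)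
  set c : ℝ := 2 * Real.pi ^ 2 / (2 * (n : ℝ) + 1) ^ 2 with hcdef
  have hbound : ∀ j, -l j ≤ c * (1 / 9 : ℝ) ^ j := by
    intro j
    have h1 : -(2 * (x j) ^ 2) ≤ l j := log_cos_lower (hxpos j).le (hxle3 j)
    have h2 : (x j) ^ 2 ≤ (Real.pi / ((2 * (n : ℝ) + 1) * 3 ^ j)) ^ 2 := by
      apply sq_le_sq' _ (hxle j)
      have := hxpos j
      have := hxle j
      linarith [div_nonneg hpi.le (by positivity : (0:ℝ) ≤ (2 * (n : ℝ) + 1) * 3 ^ j)]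
    have h3 : 2 * (Real.pi / ((2 * (n : ℝ) + 1) * 3 ^ j)) ^ 2 = c * (1 / 9 : ℝ) ^ j := by
      have h9 : ((3 : ℝ) ^ j) ^ 2 = 9 ^ j := by
        rw [← pow_mul, mul_comm, pow_mul]; norm_num
      have hne1 : (2 * (n : ℝ) + 1) ≠ 0 := by positivity
      have hne2 : ((3 : ℝ) ^ j) ≠ 0 := by positivity
      have hne3 : ((9 : ℝ) ^ j) ≠ 0 := by positivity
      field_simp [hcdef]
      rw [hcdef, one_div_pow, ← h9]; field_simp
    linarith
  have hgsum : Summable (fun j => c * (1 / 9 : ℝ) ^ j) :=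
    (summable_geometric_of_lt_one (by norm_num) (by norm_num)).mul_left c
  have hnegsum : Summable (fun j => -l j) :=
    Summable.of_nonneg_of_le (fun j => neg_nonneg.2 (hlnonpos j)) hbound hgsum
  have hsum : Summable l := by
    have := hnegsum.neg
    simpa using this
  refine ⟨hsum, ?_, ?_, ?_⟩
  · -- Sn n < 0
    have hSn : Sn n = ∑' j, l j := rfl
    rw [hSn, hsum.tsum_eq_zero_add]
    have htail : ∑' j, l (j + 1) ≤ 0 := by
      have h0 : (0 : ℝ) ≤ ∑' j, -l (j + 1) :=
        tsum_nonneg fun j => neg_nonneg.2 (hlnonpos (j + 1))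
      rw [tsum_neg] at h0
      linarith
    have hl0 : l 0 < 0 := by
      apply Real.log_neg (hcospos 0)
      have h1 : Real.cos (x 0) < Real.cos 0 :=
        Real.cos_lt_cos_of_nonneg_of_le_pi le_rfl
          ((hxle3 0).trans (by linarith)) (hxpos 0)
      simpa using h1
    linarith
  · -- lower bound
    have hSn : Sn n = ∑' j, l j := rfl
    have hts : ∑' j, -l j ≤ ∑' j, c * (1 / 9 : ℝ) ^ j := hnegsum.tsum_le_tsum hbound hgsum
    have hgeo : ∑' j : ℕ, c * (1 / 9 : ℝ) ^ j = c * (9 / 8 : ℝ) := by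
      rw [tsum_mul_left, tsum_geometric_of_lt_one (by norm_num) (by norm_num)]
      norm_num
    rw [hgeo, tsum_neg] at hts
    have hfin : c * (9 / 8 : ℝ) ≤ 9 / 4 * Real.pi ^ 2 * (1 / ((n : ℝ) + 1)) := by
      rw [hcdef]
      have hn1 : (0 : ℝ) < (n : ℝ) + 1 := by positivity
      have hsq : ((n : ℝ) + 1) ≤ (2 * (n : ℝ) + 1) ^ 2 := by
        have : (0 : ℝ) ≤ n := Nat.cast_nonneg n
        nlinarith
      have h := div_le_div_of_nonneg_left
        (by positivity : (0:ℝ) ≤ 9 / 4 * Real.pi ^ 2) hn1 hsq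
      calc 2 * Real.pi ^ 2 / (2 * (n : ℝ) + 1) ^ 2 * (9 / 8)
          = (9 / 4 * Real.pi ^ 2) / (2 * (n : ℝ) + 1) ^ 2 := by ring
        _ ≤ (9 / 4 * Real.pi ^ 2) / ((n : ℝ) + 1) := h
        _ = 9 / 4 * Real.pi ^ 2 * (1 / ((n : ℝ) + 1)) := by ring
    rw [hSn]
    linarith
  · -- HasProd
    have h := hsum.hasSum.rexp
    have he : (fun j => Real.cos (tn n / ((j + 2 * n + 1)! : ℝ))) = Real.exp ∘ l :=
      funext fun j => (Real.exp_log (hcospos j)).symm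
    rw [he]
    exact h

lemma fs_eq (n : ℕ) (hn : 0 < n) : fs (tn n) = -Real.exp (Sn n) := by
  obtain ⟨hsum, hneg, hlb, hP⟩ := Sn_facts n hn
  have h := Multipliable.prod_mul_tprod_nat_mul'
    (f := fun i => Real.cos (tn n / ((i + 1)! : ℝ))) (k := 2 * n) hP.multipliable
  rw [fs, ← h, finprod_eq n hn, hP.tprod_eq]
  ring

theorem stmt6 :
    (∀ n : ℕ, 0 < n → -1 < fs (tn n)) ∧
      Tendsto (fun n => fs (tn n)) atTop (nhds (-1)) := by
  constructor
  · intro n hn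
    rw [fs_eq n hn]
    have h := (Sn_facts n hn).2.1
    have hlt : Real.exp (Sn n) < 1 := by
      calc Real.exp (Sn n) < Real.exp 0 := Real.exp_lt_exp.2 h
        _ = 1 := Real.exp_zero
    linarith
  · have hS0 : Tendsto Sn atTop (nhds 0) := by
      have hlow : Tendsto (fun n : ℕ => -(9 / 4 * Real.pi ^ 2 * (1 / ((n : ℝ) + 1))))
          atTop (nhds 0) := by
        have h2 := (tendsto_one_div_add_atTop_nhds_zero_nat.const_mul
          (9 / 4 * Real.pi ^ 2)).neg
        simpa using h2
      apply tendsto_of_tendsto_of_tendsto_of_le_of_le' hlow tendsto_const_nhds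
      · filter_upwards [eventually_ge_atTop 1] with n hn
        exact (Sn_facts n hn).2.2.1
      · filter_upwards [eventually_ge_atTop 1] with n hn
        exact ((Sn_facts n hn).2.1).le
    have hmain : Tendsto (fun n => -Real.exp (Sn n)) atTop (nhds (-1)) := by
      have h := ((Real.continuous_exp.tendsto 0).comp hS0).neg
      simpa [Real.exp_zero] using h
    apply hmain.congr'
    filter_upwards [eventually_ge_atTop 1] with n hn
    exact (fs_eq n hn).symm
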